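/- For every n ∈ ℕ, the function ρ ↦ c_n(ρ) is differentiable on (0,∞) and its derivative satisfies c_n'(ρ) = (1/(4π·n!·√ρ)) · ∫_{−∞}^{∞} z^{2n}/cosh((z + ln ρ)/2) dz = (1/(2π·n!·√ρ)) · Σ_{k=0}^{n} C(2n,2k)·2^{2k}·(ln ρ)^{2(n−k)} · ∫_{−∞}^{∞} u^{2k}/cosh(u) du = (1/(2·n!)) · Σ_{k=0}^{n} C(2n,2k)·π^{2k}·|E_{2k}|·(ln ρ)^{2(n−k)}·ρ^{−1/2}. -/

import Mathlib

open MeasureTheory Real Filter Topology Set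

lemma tendsto_pow_mul_exp_neg_mul (m : ℕ) {c : ℝ} (hc : 0 < c) :
    Tendsto (fun x : ℝ => x ^ m * Real.exp (-c * x)) atTop (𝓝 0) := by
  have h := ((tendsto_pow_mul_exp_neg_atTop_nhds_zero m).comp
    (tendsto_id.const_mul_atTop hc)).const_mul ((c : ℝ) ^ m)⁻¹
  rw [mul_zero] at h
  refine h.congr fun x => ?_
  have hc' : c ^ m ≠ 0 := by positivity
  simp only [Function.comp_apply, id_eq, mul_pow, neg_mul]
  field_simp

lemma integrable_aux (m : ℕ) {b : ℝ} (hb : 0 < b) :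
    Integrable (fun x : ℝ => |x| ^ m * Real.exp (-b * |x|)) := by
  have hcont : Continuous fun x : ℝ => |x| ^ m * Real.exp (-b * |x|) := by fun_prop
  have ho : (fun x : ℝ => |x| ^ m * Real.exp (-b * |x|)) =O[atTop]
      fun x : ℝ => Real.exp (-(b/2) * x) := by
    apply Asymptotics.IsLittleO.isBigO
    rw [Asymptotics.isLittleO_iff_tendsto (fun x hx => absurd hx (Real.exp_ne_zero _))]
    refine (tendsto_pow_mul_exp_neg_mul m (c := b/2) (by linarith)).congr' ?_
    filter_upwards [eventually_ge_atTop (0:ℝ)] with x hx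
    rw [abs_of_nonneg hx, mul_div_assoc, ← Real.exp_sub]
    congr 2
    ring
  refine hcont.locallyIntegrable.integrable_of_isBigO_atTop_of_norm_isNegInvariant ?_ ho ?_
  · filter_upwards with x
    simp [Function.comp, abs_neg]
  · exact ⟨Ioi 0, Ioi_mem_atTop 0, exp_neg_integrableOn_Ioi 0 (by linarith)⟩

lemma exp_abs_le_two_cosh (x : ℝ) : Real.exp |x| ≤ 2 * Real.cosh x := by
  rw [Real.cosh_eq]
  rcases abs_cases x with ⟨h, _⟩ | ⟨h, _⟩ <;> rw [h] <;>
    nlinarith [(Real.exp_pos x).le, (Real.exp_pos (-x)).le]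

lemma integrable_pow_div_cosh (j : ℕ) :
    Integrable fun u : ℝ => u ^ j / Real.cosh u := by
  refine ((integrable_aux j one_pos).const_mul 2).mono' ?_ ?_
  · exact ((continuous_pow j).div Real.continuous_cosh
      (fun x => (Real.cosh_pos x).ne')).aestronglyMeasurable
  · filter_upwards with u
    rw [norm_div, Real.norm_eq_abs, Real.norm_eq_abs, abs_pow, abs_of_pos (Real.cosh_pos u),
      div_le_iff₀ (Real.cosh_pos u)]
    have h1 := exp_abs_le_two_cosh u
    have h2 : Real.exp (-1 * |u|) * Real.exp |u| = 1 := by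
      rw [← Real.exp_add]; norm_num
    have h3 : 0 ≤ |u| ^ j * Real.exp (-1 * |u|) := by positivity
    have h5 : |u| ^ j * (Real.exp (-1 * |u|) * Real.exp |u|) = |u| ^ j := by
      rw [h2, mul_one]
    nlinarith [mul_le_mul_of_nonneg_left h1 h3, h5]

lemma integral_odd_eq_zero {f : ℝ → ℝ} (hf : ∀ x, f (-x) = - f x) : ∫ x : ℝ, f x = 0 := by
  have h : ∫ x : ℝ, f (-x) = ∫ x : ℝ, f x := integral_neg_eq_self f volume
  simp_rw [hf, integral_neg] at h
  linarith

lemma sqrt_eq_exp_half_log {ρ : ℝ} (hρ : 0 < ρ) :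
    Real.sqrt ρ = Real.exp (Real.log ρ / 2) := by
  have h : Real.exp (Real.log ρ / 2) ^ 2 = ρ := by
    rw [sq, ← Real.exp_add, show Real.log ρ/2 + Real.log ρ/2 = Real.log ρ by ring,
      Real.exp_log hρ]
  conv_lhs => rw [← h]
  exact Real.sqrt_sq (Real.exp_pos _).le

lemma cosh_shift {ρ : ℝ} (hρ : 0 < ρ) (z : ℝ) :
    2 * Real.sqrt ρ * Real.cosh ((z + Real.log ρ) / 2)
      = Real.exp (-z/2) + ρ * Real.exp (z/2) := by
  rw [Real.cosh_eq, sqrt_eq_exp_half_log hρ]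
  have e1 : Real.exp (Real.log ρ/2) * Real.exp ((z + Real.log ρ)/2) = ρ * Real.exp (z/2) := by
    rw [← Real.exp_add, show Real.log ρ/2 + (z + Real.log ρ)/2 = Real.log ρ + z/2 by ring,
      Real.exp_add, Real.exp_log hρ]
  have e2 : Real.exp (Real.log ρ/2) * Real.exp (-((z + Real.log ρ)/2)) = Real.exp (-z/2) := by
    rw [← Real.exp_add]; congr 1; ring
  linear_combination e1 + e2

lemma deriv_integrand_eq {ρ : ℝ} (hρ : 0 < ρ) (n : ℕ) (z : ℝ) :
    Real.exp z / (1 + ρ * Real.exp z) * z ^ (2*n) * Real.exp (-z/2)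
      = (1 / (2 * Real.sqrt ρ)) * (z ^ (2*n) / Real.cosh ((z + Real.log ρ) / 2)) := by
  have h := cosh_shift hρ z
  have hden : (0:ℝ) < 1 + ρ * Real.exp z := by positivity
  have hc := Real.cosh_pos ((z + Real.log ρ)/2)
  have hs : (0:ℝ) < Real.sqrt ρ := Real.sqrt_pos.2 hρ
  have e1 : Real.exp z * Real.exp (-z/2) = Real.exp (z/2) := by
    rw [← Real.exp_add]; congr 1; ring
  have e2 : Real.exp (z/2) * Real.exp (-z/2) = 1 := by
    rw [← Real.exp_add, show z/2 + -z/2 = 0 by ring, Real.exp_zero]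
  have e3 : Real.exp (z/2) * Real.exp (z/2) = Real.exp z := by
    rw [← Real.exp_add]; congr 1; ring
  have key : Real.exp z * Real.exp (-z/2)
      * (2 * Real.sqrt ρ * Real.cosh ((z + Real.log ρ)/2)) = 1 + ρ * Real.exp z := by
    rw [h]
    linear_combination (Real.exp (-z/2) + ρ * Real.exp (z/2)) * e1 + e2 + ρ * e3
  have hG : Real.exp z / (1 + ρ * Real.exp z) * Real.exp (-z/2)
      = 1 / (2 * Real.sqrt ρ * Real.cosh ((z + Real.log ρ)/2)) := by
    rw [div_mul_eq_mul_div, div_eq_div_iff hden.ne' (by positivity)]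
    rw [one_mul]
    exact key
  calc Real.exp z / (1 + ρ * Real.exp z) * z ^ (2*n) * Real.exp (-z/2)
      = (Real.exp z / (1 + ρ * Real.exp z) * Real.exp (-z/2)) * z ^ (2*n) := by ring
    _ = 1 / (2 * Real.sqrt ρ * Real.cosh ((z + Real.log ρ)/2)) * z ^ (2*n) := by rw [hG]
    _ = (1 / (2 * Real.sqrt ρ)) * (z ^ (2*n) / Real.cosh ((z + Real.log ρ)/2)) := by
        rw [one_div, mul_inv, one_div]
        ring

lemma hasDerivAt_int (n : ℕ) {ρ : ℝ} (hρ : 0 < ρ) :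
    HasDerivAt (fun x : ℝ => ∫ z : ℝ, Real.log (1 + x * Real.exp z) * z ^ (2*n) * Real.exp (-z/2))
      (∫ z : ℝ, Real.exp z / (1 + ρ * Real.exp z) * z ^ (2*n) * Real.exp (-z/2)) ρ := by
  have hcont : ∀ x : ℝ, 0 < x → Continuous
      (fun z : ℝ => Real.log (1 + x * Real.exp z) * z ^ (2*n) * Real.exp (-z/2)) := by
    intro x hx
    have h1 : Continuous fun z : ℝ => 1 + x * Real.exp z := by fun_prop
    exact ((h1.log fun z => by positivity).mul (continuous_pow _)).mul (by fun_prop)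
  have hmain := hasDerivAt_integral_of_dominated_loc_of_deriv_le
    (μ := volume) (x₀ := ρ) (s := Metric.ball ρ (ρ/2))
    (F := fun x z => Real.log (1 + x * Real.exp z) * z ^ (2*n) * Real.exp (-z/2))
    (F' := fun x z => Real.exp z / (1 + x * Real.exp z) * z ^ (2*n) * Real.exp (-z/2))
    (bound := fun z => (1 + 2/ρ) * (|z| ^ (2*n) * Real.exp (-(1/2) * |z|)))
    (Metric.ball_mem_nhds _ (by positivity)) ?_ ?_ ?_ ?_ ?_ ?_
  · exact hmain.2
  · -- measurability of F x for x near ρ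
    filter_upwards [eventually_gt_nhds hρ] with x hx
    exact (hcont x hx).aestronglyMeasurable
  · -- integrability of F ρ
    have hint : Integrable (fun z : ℝ =>
        (Real.log (1 + ρ) + ρ) * (|z| ^ (2*n) * Real.exp (-(1/2) * |z|))
          + |z| ^ (2*n+1) * Real.exp (-(1/2) * |z|)) :=
      ((integrable_aux (2*n) one_half_pos).const_mul _).add
        (integrable_aux (2*n+1) one_half_pos)
    refine hint.mono' (hcont ρ hρ).aestronglyMeasurable ?_
    filter_upwards with z
    have hL0 : 0 ≤ Real.log (1 + ρ * Real.exp z) :=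
      Real.log_nonneg (by nlinarith [(Real.exp_pos z).le])
    have hlρ : 0 ≤ Real.log (1 + ρ) := Real.log_nonneg (by linarith)
    rw [Real.norm_eq_abs, abs_mul, abs_mul, abs_pow, abs_of_nonneg hL0,
      abs_of_pos (Real.exp_pos _)]
    rcases le_or_gt 0 z with hz | hz
    · have habs : |z| = z := abs_of_nonneg hz
      have hL : Real.log (1 + ρ * Real.exp z) ≤ Real.log (1 + ρ) + z := by
        have h1 : 1 + ρ * Real.exp z ≤ (1 + ρ) * Real.exp z := by
          nlinarith [Real.add_one_le_exp z]
        calc Real.log (1 + ρ * Real.exp z) ≤ Real.log ((1 + ρ) * Real.exp z) :=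
              Real.log_le_log (by positivity) h1
          _ = Real.log (1 + ρ) + z := by
              rw [Real.log_mul (by positivity) (Real.exp_ne_zero _), Real.log_exp]
      have hexp : Real.exp (-(1/2) * |z|) = Real.exp (-z/2) := by
        rw [habs]; congr 1; ring
      rw [hexp, habs]
      have hP : (0:ℝ) ≤ z ^ (2*n) * Real.exp (-z/2) := by positivity
      have h2 : z ^ (2*n+1) * Real.exp (-z/2) = z * (z ^ (2*n) * Real.exp (-z/2)) := by
        rw [pow_succ]; ring
      nlinarith [mul_le_mul_of_nonneg_right hL hP, mul_nonneg hρ.le hP, h2]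
    · have habs : |z| = -z := abs_of_neg hz
      have hL : Real.log (1 + ρ * Real.exp z) ≤ ρ * Real.exp z := by
        have := Real.log_le_sub_one_of_pos (show (0:ℝ) < 1 + ρ * Real.exp z by positivity)
        linarith
      have hexp : Real.exp (-(1/2) * |z|) = Real.exp (z/2) := by
        rw [habs]; congr 1; ring
      rw [hexp, habs]
      have he : Real.exp z * Real.exp (-z/2) = Real.exp (z/2) := by
        rw [← Real.exp_add]; congr 1; ring
      have hP : (0:ℝ) ≤ (-z) ^ (2*n) := pow_nonneg (by linarith) _
      have h3 : (0:ℝ) ≤ (-z) ^ (2*n+1) * Real.exp (z/2) :=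
        mul_nonneg (pow_nonneg (by linarith : (0:ℝ) ≤ -z) _) (Real.exp_pos _).le
      have h4 : z ^ (2*n) = (-z) ^ (2*n) := (Even.neg_pow (even_two_mul n) z).symm
      have he2 : ρ * Real.exp z * Real.exp (-z/2) * (-z) ^ (2*n)
          = ρ * Real.exp (z/2) * (-z) ^ (2*n) := by
        rw [mul_assoc ρ, he]
      nlinarith [mul_le_mul_of_nonneg_right
        (mul_le_mul_of_nonneg_right hL (Real.exp_pos (-z/2)).le) hP, he2, h3,
        mul_nonneg (mul_nonneg hlρ hP) (Real.exp_pos (z/2)).le]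
  · -- measurability of F' ρ
    have h1 : Continuous fun z : ℝ => 1 + ρ * Real.exp z := by fun_prop
    exact (((Real.continuous_exp.div h1 fun z => by positivity).mul
      (continuous_pow _)).mul (by fun_prop)).aestronglyMeasurable
  · -- bound
    filter_upwards with z x hx
    have hx0 : ρ/2 < x := by
      rw [Metric.mem_ball, Real.dist_eq, abs_sub_lt_iff] at hx
      linarith [hx.2]
    have hx0' : 0 < x := by linarith
    have hden : (0:ℝ) < 1 + x * Real.exp z := by positivity
    rw [Real.norm_eq_abs, abs_mul, abs_mul, abs_pow,
      abs_of_pos (div_pos (Real.exp_pos z) hden), abs_of_pos (Real.exp_pos _)]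
    have hP : (0:ℝ) ≤ |z| ^ (2*n) := by positivity
    rcases le_or_gt 0 z with hz | hz
    · have hexp : Real.exp (-(1/2) * |z|) = Real.exp (-z/2) := by
        rw [abs_of_nonneg hz]; congr 1; ring
      rw [hexp]
      have hq : Real.exp z / (1 + x * Real.exp z) ≤ 2/ρ := by
        rw [div_le_div_iff₀ hden (by positivity)]
        have : ρ * Real.exp z ≤ 2 * x * Real.exp z := by
          nlinarith [(Real.exp_pos z).le]
        nlinarith [(Real.exp_pos z).le]
      have h2 : (0:ℝ) ≤ |z| ^ (2*n) * Real.exp (-z/2) := by positivity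
      have hρ2 : (0:ℝ) ≤ 2/ρ := by positivity
      nlinarith [mul_le_mul_of_nonneg_right hq h2]
    · have hexp : Real.exp (-(1/2) * |z|) = Real.exp (z/2) := by
        rw [abs_of_neg hz]; congr 1; ring
      rw [hexp]
      have hq : Real.exp z / (1 + x * Real.exp z) ≤ Real.exp z := by
        rw [div_le_iff₀ hden]
        nlinarith [(Real.exp_pos z).le, mul_nonneg hx0'.le
          (mul_nonneg (Real.exp_pos z).le (Real.exp_pos z).le)]
      have he : Real.exp z * Real.exp (-z/2) = Real.exp (z/2) := by
        rw [← Real.exp_add]; congr 1; ring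
      have h2 : (0:ℝ) ≤ |z| ^ (2*n) * Real.exp (-z/2) := by positivity
      have hρ2 : (0:ℝ) ≤ 2/ρ := by positivity
      nlinarith [mul_le_mul_of_nonneg_right
        (mul_le_mul_of_nonneg_right hq (Real.exp_pos (-z/2)).le) hP,
        mul_nonneg (mul_nonneg hρ2 hP) (Real.exp_pos (z/2)).le]
  · -- bound integrable
    exact (integrable_aux (2*n) one_half_pos).const_mul _
  · -- differentiability
    filter_upwards with z x hx
    have hx0 : 0 < x := by
      rw [Metric.mem_ball, Real.dist_eq, abs_sub_lt_iff] at hx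
      linarith [hx.2, hρ]
    have h1 : HasDerivAt (fun x : ℝ => 1 + x * Real.exp z) (Real.exp z) x := by
      simpa using ((hasDerivAt_id x).mul_const (Real.exp z)).const_add 1
    have h2 := ((h1.log (by positivity)).mul_const (z ^ (2*n))).mul_const (Real.exp (-z/2))
    exact h2


lemma integral_odd_pow_div_cosh {j : ℕ} (hj : Odd j) :
    (∫ u : ℝ, u ^ j / Real.cosh u) = 0 := by
  apply integral_odd_eq_zero
  intro x
  rw [Real.cosh_neg, hj.neg_pow, neg_div]

lemma step_subst (n : ℕ) (L : ℝ) :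
    (∫ z : ℝ, z ^ (2*n) / Real.cosh ((z + L) / 2))
      = 2 * ∫ u : ℝ, (2*u - L) ^ (2*n) / Real.cosh u := by
  have h1 : ∀ z : ℝ, z ^ (2*n) / Real.cosh ((z + L)/2)
      = (fun u : ℝ => (2*u - L) ^ (2*n) / Real.cosh u) ((z + L)/2) := by
    intro z
    simp only []
    congr 2
    ring
  simp_rw [h1]
  calc (∫ z : ℝ, (fun u : ℝ => (2*u - L) ^ (2*n) / Real.cosh u) ((z + L)/2))
      = ∫ z : ℝ, (fun w : ℝ => (fun u : ℝ => (2*u - L) ^ (2*n) / Real.cosh u) (w/2)) (z + L) := by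
        simp only []
    _ = ∫ z : ℝ, (fun u : ℝ => (2*u - L) ^ (2*n) / Real.cosh u) (z/2) :=
        integral_add_right_eq_self
          (fun w : ℝ => (fun u : ℝ => (2*u - L) ^ (2*n) / Real.cosh u) (w/2)) L
    _ = |(2:ℝ)| • ∫ u : ℝ, (2*u - L) ^ (2*n) / Real.cosh u :=
        Measure.integral_comp_div (fun u : ℝ => (2*u - L) ^ (2*n) / Real.cosh u) 2
    _ = 2 * ∫ u : ℝ, (2*u - L) ^ (2*n) / Real.cosh u := by
        rw [abs_two, smul_eq_mul]

lemma step_binom (n : ℕ) (L : ℝ) :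
    (∫ u : ℝ, (2*u - L) ^ (2*n) / Real.cosh u)
      = ∑ j ∈ Finset.range (2*n+1),
          ((2*n).choose j : ℝ) * 2 ^ j * (-L) ^ (2*n-j) * ∫ u : ℝ, u ^ j / Real.cosh u := by
  have hpt : ∀ u : ℝ, (2*u - L) ^ (2*n) / Real.cosh u
      = ∑ j ∈ Finset.range (2*n+1),
          ((2*n).choose j : ℝ) * 2 ^ j * (-L) ^ (2*n-j) * (u ^ j / Real.cosh u) := by
    intro u
    rw [show (2*u - L) = (2*u + (-L)) by ring, add_pow, Finset.sum_div]
    refine Finset.sum_congr rfl fun j _ => ?_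
    rw [mul_pow]
    ring
  simp_rw [hpt]
  rw [integral_finset_sum _ fun j _ => (integrable_pow_div_cosh j).const_mul _]
  exact Finset.sum_congr rfl fun j _ => integral_const_mul _ _

lemma step_reindex (n : ℕ) (t : ℕ → ℝ) (ht : ∀ j, Odd j → t j = 0) :
    ∑ j ∈ Finset.range (2*n+1), t j = ∑ k ∈ Finset.range (n+1), t (2*k) := by
  rw [← Finset.sum_filter_add_sum_filter_not (Finset.range (2*n+1)) (fun j => Even j)]
  have h2 : ∑ j ∈ (Finset.range (2*n+1)).filter (fun j => ¬ Even j), t j = 0 :=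
    Finset.sum_eq_zero fun j hj => ht j (Nat.not_even_iff_odd.1 (Finset.mem_filter.1 hj).2)
  rw [h2, add_zero]
  refine Finset.sum_nbij' (fun j => j / 2) (fun k => 2 * k) ?_ ?_ ?_ ?_ ?_
  · intro j hj
    rw [Finset.mem_filter, Finset.mem_range] at hj
    obtain ⟨r, hr⟩ := hj.2
    rw [Finset.mem_range]
    omega
  · intro k hk
    rw [Finset.mem_range] at hk
    rw [Finset.mem_filter, Finset.mem_range]
    exact ⟨by omega, ⟨k, by omega⟩⟩
  · intro j hj
    rw [Finset.mem_filter] at hj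
    obtain ⟨r, hr⟩ := hj.2
    omega
  · intro k _
    omega
  · intro j hj
    rw [Finset.mem_filter] at hj
    obtain ⟨r, hr⟩ := hj.2
    congr 1
    omega

noncomputable def cCoef (n : ℕ) (ρ : ℝ) : ℝ :=
  (1 / (2 * Real.pi * n.factorial)) *
    ∫ z : ℝ, Real.log (1 + ρ * Real.exp z) * z ^ (2 * n) * Real.exp (-z / 2)

noncomputable def absEuler (j : ℕ) : ℝ :=
  (∫ u : ℝ, u ^ (2 * j) / Real.cosh u) / (2 * (Real.pi / 2) ^ (2 * j + 1))

/-- `ρ ↦ c_n(ρ)` is differentiable on `(0,∞)`, with derivative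
`c_n'(ρ) = (1/(4π·n!·√ρ)) ∫ z^{2n}/cosh((z+ln ρ)/2) dz
        = (1/(2π·n!·√ρ)) Σ_k C(2n,2k)·2^{2k}·(ln ρ)^{2(n−k)}·∫ u^{2k}/cosh u du
        = (1/(2·n!)) Σ_k C(2n,2k)·π^{2k}·|E_{2k}|·(ln ρ)^{2(n−k)}·ρ^{−1/2}`. -/
theorem stmt5 (n : ℕ) (ρ : ℝ) (hρ : 0 < ρ) :
    HasDerivAt (cCoef n)
      ((1 / (4 * Real.pi * n.factorial * Real.sqrt ρ)) *
        ∫ z : ℝ, z ^ (2 * n) / Real.cosh ((z + Real.log ρ) / 2)) ρ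
    ∧ (1 / (4 * Real.pi * n.factorial * Real.sqrt ρ)) *
        (∫ z : ℝ, z ^ (2 * n) / Real.cosh ((z + Real.log ρ) / 2))
      = (1 / (2 * Real.pi * n.factorial * Real.sqrt ρ)) *
          ∑ k ∈ Finset.range (n + 1),
            (Nat.choose (2 * n) (2 * k) : ℝ) * 2 ^ (2 * k) * (Real.log ρ) ^ (2 * (n - k))
              * ∫ u : ℝ, u ^ (2 * k) / Real.cosh u
    ∧ (1 / (2 * Real.pi * n.factorial * Real.sqrt ρ)) *
          (∑ k ∈ Finset.range (n + 1),
            (Nat.choose (2 * n) (2 * k) : ℝ) * 2 ^ (2 * k) * (Real.log ρ) ^ (2 * (n - k))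
              * ∫ u : ℝ, u ^ (2 * k) / Real.cosh u)
      = (1 / (2 * n.factorial)) *
          ∑ k ∈ Finset.range (n + 1),
            (Nat.choose (2 * n) (2 * k) : ℝ) * Real.pi ^ (2 * k) * absEuler k
              * (Real.log ρ) ^ (2 * (n - k)) / Real.sqrt ρ := by
  have hf : ((n.factorial : ℝ)) ≠ 0 := Nat.cast_ne_zero.2 n.factorial_ne_zero
  have hs : Real.sqrt ρ ≠ 0 := ne_of_gt (Real.sqrt_pos.2 hρ)
  have hπ : Real.pi ≠ 0 := Real.pi_ne_zero
  have hval : (∫ z : ℝ, Real.exp z / (1 + ρ * Real.exp z) * z ^ (2*n) * Real.exp (-z/2))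
      = (1 / (2 * Real.sqrt ρ)) * ∫ z : ℝ, z ^ (2*n) / Real.cosh ((z + Real.log ρ)/2) := by
    simp_rw [deriv_integrand_eq hρ n]
    exact integral_const_mul _ _
  have hI : (∫ z : ℝ, z ^ (2*n) / Real.cosh ((z + Real.log ρ)/2))
      = 2 * ∑ k ∈ Finset.range (n+1),
          ((2*n).choose (2*k) : ℝ) * 2 ^ (2*k) * (Real.log ρ) ^ (2*(n-k))
            * ∫ u : ℝ, u ^ (2*k) / Real.cosh u := by
    rw [step_subst n (Real.log ρ), step_binom n (Real.log ρ)]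
    congr 1
    rw [step_reindex n _ (fun j hj => by rw [integral_odd_pow_div_cosh hj, mul_zero])]
    refine Finset.sum_congr rfl fun k hk => ?_
    rw [Finset.mem_range] at hk
    have h1 : (-(Real.log ρ)) ^ (2*n - 2*k) = (Real.log ρ) ^ (2*(n-k)) := by
      rw [show 2*n - 2*k = 2*(n-k) by omega]
      exact Even.neg_pow (even_two_mul _) _
    rw [h1]
  refine ⟨?_, ?_, ?_⟩
  · have hd := HasDerivAt.const_mul (𝕜 := ℝ) (1 / (2 * Real.pi * (n.factorial : ℝ)))
      (hasDerivAt_int n hρ)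
    rw [hval, ← mul_assoc,
      show (1 / (2 * Real.pi * (n.factorial : ℝ))) * (1 / (2 * Real.sqrt ρ))
          = 1 / (4 * Real.pi * (n.factorial : ℝ) * Real.sqrt ρ) by
        rw [div_mul_div_comm, one_mul]; congr 1; ring] at hd
    exact hd
  · rw [hI]
    field_simp
    ring
  · rw [Finset.mul_sum, Finset.mul_sum]
    refine Finset.sum_congr rfl fun k _ => ?_
    rw [show (∫ u : ℝ, u ^ (2*k) / Real.cosh u)
          = absEuler k * (2 * (Real.pi/2) ^ (2*k+1)) by
        rw [absEuler, div_mul_cancel₀]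
        positivity,
      div_pow, pow_succ (2:ℝ) (2*k), pow_succ Real.pi (2*k)]
    field_simp
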